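/- Let α, β, ω ∈ ℝ and let j₁, j₂, θ₁, θ₂ : ℝ → ℝ be differentiable functions satisfying the leading-order system (L). Then the function τ ↦ H(j₁(τ), j₂(τ), θ₁(τ), θ₂(τ)) = ¼(j₁(τ)+j₂(τ))² + αω²(θ₁(τ)+θ₂(τ)) + √2 βω (sin θ₁(τ) + sin θ₂(τ)) has derivative zero everywhere; i.e. H is a constant of motion of (L). -/

import Mathlib

/-- The Hamiltonian `H = ¼(j₁+j₂)² + αω²(θ₁+θ₂) + √2 βω (sin θ₁ + sin θ₂)`
is a constant of motion of the leading-order system (L). -/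
theorem hamiltonian_constant_of_motion
    (α β ω : ℝ) (j₁ j₂ θ₁ θ₂ : ℝ → ℝ)
    (hj₁ : ∀ τ, HasDerivAt j₁ (-(α * ω ^ 2) - Real.sqrt 2 * β * ω * Real.cos (θ₁ τ)) τ)
    (hθ₁ : ∀ τ, HasDerivAt θ₁ ((j₁ τ + j₂ τ) / 2) τ)
    (hj₂ : ∀ τ, HasDerivAt j₂ (-(α * ω ^ 2) - Real.sqrt 2 * β * ω * Real.cos (θ₂ τ)) τ)
    (hθ₂ : ∀ τ, HasDerivAt θ₂ ((j₁ τ + j₂ τ) / 2) τ) :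
    ∀ τ : ℝ, HasDerivAt (fun τ =>
      (j₁ τ + j₂ τ) ^ 2 / 4 + α * ω ^ 2 * (θ₁ τ + θ₂ τ) +
        Real.sqrt 2 * β * ω * (Real.sin (θ₁ τ) + Real.sin (θ₂ τ))) 0 τ := by
  intro τ
  have h := ((((hj₁ τ).add (hj₂ τ)).pow 2).div_const 4).add
    (((hθ₁ τ).add (hθ₂ τ)).const_mul (α * ω ^ 2)) |>.add
    (((((hθ₁ τ).sin).add ((hθ₂ τ).sin))).const_mul (Real.sqrt 2 * β * ω))
  convert h using 1
  · rfl
  · rfl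
  · funext x
    simp only [Pi.add_apply, Pi.pow_apply]
  · norm_num [Pi.add_apply]
    ring
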